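/- In S = F[[x,y]]/(x²y), the internal direct sum decomposition Q = x²Q ⊕ yQ of the total quotient ring Q holds: x²Q ∩ yQ = 0 and x²Q + yQ = Q. -/

import Mathlib

set_option synthInstance.maxHeartbeats 1000000
set_option maxHeartbeats 1000000

noncomputable section

/-- The D-infinity plane singularity `S = F[[x,y]]/(x²y)`. -/
abbrev Dinf (F : Type*) [Field F] : Type _ :=
  MvPowerSeries (Fin 2) F ⧸
    (Ideal.span {(MvPowerSeries.X (0 : Fin 2)) ^ 2 * MvPowerSeries.X 1} :
      Ideal (MvPowerSeries (Fin 2) F))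

variable (F : Type*) [Field F]

/-- The image of the variable `x` in `S`. -/
abbrev xS : Dinf F := Ideal.Quotient.mk _ (MvPowerSeries.X 0)

/-- The image of the variable `y` in `S`. -/
abbrev yS : Dinf F := Ideal.Quotient.mk _ (MvPowerSeries.X 1)

/-- The total quotient ring `Q` of `S`, the localization at the nonzerodivisors. -/
abbrev QS : Type _ := Localization (nonZeroDivisors (Dinf F))

/-- The canonical map `S → Q`. -/
abbrev toQ : Dinf F →+* QS F := algebraMap (Dinf F) (QS F)

section Helpers

open MvPowerSeries Finsupp

variable {F : Type*} [Field F]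

def dd (a b : ℕ) : Fin 2 →₀ ℕ := single 0 a + single 1 b

lemma dd_eq (n : Fin 2 →₀ ℕ) : n = dd (n 0) (n 1) := by
  ext i; fin_cases i <;> simp [dd, Finsupp.single_apply]

lemma dd_le {a b c e : ℕ} : dd a b ≤ dd c e ↔ a ≤ c ∧ b ≤ e := by
  constructor
  · intro h
    exact ⟨by simpa [dd, Finsupp.single_apply] using h 0,
      by simpa [dd, Finsupp.single_apply] using h 1⟩
  · rintro ⟨h1, h2⟩ i
    fin_cases i <;> simp [dd, Finsupp.single_apply, h1, h2]

lemma dd_apply0 (a b : ℕ) : dd a b 0 = a := by simp [dd, Finsupp.single_apply]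
lemma dd_apply1 (a b : ℕ) : dd a b 1 = b := by simp [dd, Finsupp.single_apply]

lemma dd_sub {a b c e : ℕ} : dd a b - dd c e = dd (a - c) (b - e) := by
  ext i; fin_cases i <;> simp [dd, Finsupp.single_apply]

lemma X2X1_eq : (X 0 ^ 2 * X 1 : MvPowerSeries (Fin 2) F) = monomial (dd 2 1) 1 := by
  rw [X_pow_eq, X_def, monomial_mul_monomial, one_mul]; rfl

lemma X2_eq : (X 0 ^ 2 : MvPowerSeries (Fin 2) F) = monomial (dd 2 0) 1 := by
  rw [X_pow_eq]; congr 1; simp [dd]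

lemma X1_eq : (X 1 : MvPowerSeries (Fin 2) F) = monomial (dd 0 1) 1 := by
  rw [X_def]; congr 1; simp [dd]

lemma key (f g : MvPowerSeries (Fin 2) F)
    (E : (X 0 ^ 2 + X 1) * f = X 0 ^ 2 * X 1 * g) :
    (X 0 ^ 2 * X 1 : MvPowerSeries (Fin 2) F) ∣ f := by
  have E' : ∀ a b : ℕ,
      (if 2 ≤ a then coeff (dd (a - 2) b) f else 0) +
        (if 1 ≤ b then coeff (dd a (b - 1)) f else 0) =
      if 2 ≤ a ∧ 1 ≤ b then coeff (dd (a - 2) (b - 1)) g else 0 := by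
    intro a b
    have := congrArg (coeff (dd a b)) E
    rw [add_mul, map_add, X2X1_eq, X2_eq, X1_eq, coeff_monomial_mul, coeff_monomial_mul,
      coeff_monomial_mul] at this
    simpa [dd_le, dd_sub] using this
  have hf0 : ∀ a, coeff (dd a 0) f = 0 := by
    intro a
    have := E' (a + 2) 0
    simpa using this
  have hfa : ∀ a b, a < 2 → coeff (dd a b) f = 0 := by
    intro a b ha
    have := E' a (b + 1)
    simp [show ¬ 2 ≤ a by omega] at this
    exact this
  have main : ∀ a b, coeff (dd (a + 2) (b + 1)) f
      = coeff (dd a (b + 1)) g - coeff (dd a (b + 2)) f := by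
    intro a b
    have := E' (a + 2) (b + 2)
    simp [show a + 2 - 2 = a from by omega, show b + 2 - 1 = b + 1 from by omega] at this
    linear_combination this
  refine ⟨show MvPowerSeries (Fin 2) F from fun m => coeff (dd (m 0) (m 1 + 1)) g - coeff (dd (m 0) (m 1 + 2)) f, ?_⟩
  ext n
  rw [dd_eq n, X2X1_eq, coeff_monomial_mul]
  obtain ⟨a, b, h⟩ : ∃ a b, n 0 = a ∧ n 1 = b := ⟨n 0, n 1, rfl, rfl⟩
  rw [h.1, h.2]
  simp only [dd_le, dd_sub, one_mul, coeff_apply, dd_apply0, dd_apply1]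
  by_cases ha : 2 ≤ a
  · by_cases hb : 1 ≤ b
    · rw [if_pos ⟨ha, hb⟩]
      obtain ⟨a', rfl⟩ : ∃ a', a = a' + 2 := ⟨a - 2, by omega⟩
      obtain ⟨b', rfl⟩ : ∃ b', b = b' + 1 := ⟨b - 1, by omega⟩
      rw [show a' + 2 - 2 = a' from by omega, show b' + 1 - 1 = b' from by omega]
      change _ = g (dd (dd a' b' 0) (dd a' b' 1 + 1)) - f (dd (dd a' b' 0) (dd a' b' 1 + 2))
      rw [dd_apply0, dd_apply1]; exact main a' b'
    · rw [if_neg (by tauto)]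
      have : b = 0 := by omega
      rw [this]; exact hf0 a
  · rw [if_neg (by tauto)]; exact hfa a b (by omega)

set_option maxHeartbeats 4000000 in
lemma reg : (xS F ^ 2 + yS F) ∈ nonZeroDivisors (Dinf F) := by
  rw [mem_nonZeroDivisors_iff_right]
  intro z hz
  obtain ⟨p, rfl⟩ := Ideal.Quotient.mk_surjective z
  have hz' : Ideal.Quotient.mk _ (p * (X 0 ^ 2 + X 1)) = (0 : Dinf F) := by
    rw [map_mul, map_add, map_pow]; exact hz
  rw [Ideal.Quotient.eq_zero_iff_mem, Ideal.mem_span_singleton] at hz'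
  obtain ⟨c, hc⟩ := hz'
  have := key (p) c (by rw [mul_comm]; exact hc)
  rw [Ideal.Quotient.eq_zero_iff_mem, Ideal.mem_span_singleton]
  exact this

lemma aux {R : Type*} [CommRing R] {A B z q r : R} (hq : z = A * q) (hr : z = B * r)
    (h0 : A * B = 0) : z * (A + B) = 0 := by
  linear_combination A * hr + B * hq + (r + q) * h0

end Helpers

set_option maxHeartbeats 4000000 in
set_option synthInstance.maxHeartbeats 4000000 in
theorem stmt10 :
    (Ideal.span {toQ F (xS F ^ 2)} : Ideal (QS F)) ⊓ Ideal.span {toQ F (yS F)} = ⊥ ∧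
    (Ideal.span {toQ F (xS F ^ 2)} : Ideal (QS F)) ⊔ Ideal.span {toQ F (yS F)} = ⊤ := by
  have hu : IsUnit (toQ F (xS F ^ 2 + yS F)) :=
    IsLocalization.map_units (QS F) ⟨_, reg (F := F)⟩
  have h0 : toQ F (xS F ^ 2) * toQ F (yS F) = 0 := by
    rw [← map_mul]
    have : (xS F ^ 2) * yS F = 0 := by
      rw [← map_pow, ← map_mul, Ideal.Quotient.eq_zero_iff_mem]
      exact Ideal.subset_span rfl
    rw [this, map_zero]
  constructor
  · rw [eq_bot_iff]
    rintro z hzm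
    obtain ⟨hz1, hz2⟩ := Submodule.mem_inf.mp hzm
    obtain ⟨q, hq⟩ := (Ideal.mem_span_singleton (α := QS F)).mp hz1
    obtain ⟨r, hr⟩ := (Ideal.mem_span_singleton (α := QS F)).mp hz2
    have hz0 : z * toQ F (xS F ^ 2 + yS F) = 0 := by
      rw [map_add]
      exact aux (R := QS F) hq hr h0
    simpa using (hu.mul_left_eq_zero).mp hz0
  · refine Ideal.eq_top_of_isUnit_mem _ ?_ hu
    rw [map_add]
    exact Submodule.add_mem_sup (Ideal.mem_span_singleton_self _) (Ideal.mem_span_singleton_self _)
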